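/- Let 𝒪_K be the ring of integers of a p-adic field with uniformizer π, and let (F,G) be a system of a cubic and a quadratic form over 𝒪_K that is (α,β)-reduced for some α > 3, β > 2. Then h(G) > 2, h(F − L·G) > 3 for every linear form L ∈ 𝒪_K[x], and h(F,G) > 5. -/

import Mathlib

open MvPolynomial

/-- The substitution `x ↦ τ x` applied to a polynomial. -/
noncomputable def subst {𝒪 : Type*} [CommRing 𝒪] {n : ℕ}
    (τ : Matrix (Fin n) (Fin n) 𝒪) (P : MvPolynomial (Fin n) 𝒪) :
    MvPolynomial (Fin n) 𝒪 :=
  MvPolynomial.aeval (fun i => ∑ j, C (τ i j) * X j) P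

/-- `(F,G) ≻_{(α,β)} (F',G')` for some admissible `T`, `τ`: the pair `(F,G)` of a
cubic and quadratic form is `(α,β)`-reduced if no such step exists. -/
def IsReducedPair {𝒪 : Type*} [CommRing 𝒪] (π : 𝒪) {n : ℕ}
    (F G : MvPolynomial (Fin n) 𝒪) (α β : ℝ) : Prop :=
  ¬ ∃ (c₁ c₂ s : ℕ) (L : MvPolynomial (Fin n) 𝒪)
      (τ : Matrix (Fin n) (Fin n) 𝒪) (u : 𝒪),
      L.IsHomogeneous 1 ∧ IsUnit u ∧ τ.det = π ^ s * u ∧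
      (C (π ^ c₁) ∣ (subst τ F + L * subst τ G)) ∧
      (C (π ^ c₂) ∣ subst τ G) ∧
      (c₁ : ℝ) * α + (c₂ : ℝ) * β - (s : ℝ) > 0

/-- `h(P) ≤ h` modulo `π`: `P ≡ L₁H₁ + ⋯ + L_hH_h (mod π)` with the `L i`
linear forms over `𝒪`. -/
def hModLe {𝒪 : Type*} [CommRing 𝒪] (π : 𝒪) {n : ℕ}
    (P : MvPolynomial (Fin n) 𝒪) (h : ℕ) : Prop :=
  ∃ (L Q : Fin h → MvPolynomial (Fin n) 𝒪),
    (∀ i, (L i).IsHomogeneous 1) ∧ C π ∣ (P - ∑ i, L i * Q i)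

/-- `h(F,G) ≤ h` modulo `π`: for some linear form `l`, both `F - l·G` and `G` lie
modulo `π` in the ideal generated by the same `h` linear forms. -/
def hSysModLe {𝒪 : Type*} [CommRing 𝒪] (π : 𝒪) {n : ℕ}
    (F G : MvPolynomial (Fin n) 𝒪) (h : ℕ) : Prop :=
  ∃ l : MvPolynomial (Fin n) 𝒪, l.IsHomogeneous 1 ∧
    ∃ (L Q M : Fin h → MvPolynomial (Fin n) 𝒪),
      (∀ i, (L i).IsHomogeneous 1) ∧
      C π ∣ (F - l * G - ∑ i, L i * Q i) ∧ C π ∣ (G - ∑ i, L i * M i)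

lemma exists_single_of_degree_one {n : ℕ} (m : Fin n →₀ ℕ) (hm : m.degree = 1) :
    ∃ j, m = Finsupp.single j 1 := by
  have hne : m ≠ 0 := by
    intro h; rw [h, map_zero] at hm; exact one_ne_zero hm.symm
  obtain ⟨j, hj⟩ := Finsupp.support_nonempty_iff.mpr hne
  have hj1 : 1 ≤ m j := Nat.one_le_iff_ne_zero.mpr (Finsupp.mem_support_iff.mp hj)
  have hrest : ∑ i ∈ m.support.erase j, m i = 0 ∧ m j = 1 := by
    have := hm
    rw [Finsupp.degree_apply, ← Finset.add_sum_erase _ _ hj] at this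
    omega
  refine ⟨j, Finsupp.ext fun i => ?_⟩
  rcases eq_or_ne i j with rfl | hij
  · simp [hrest.2]
  · rw [Finsupp.single_apply, if_neg (Ne.symm hij)]
    by_cases hi : i ∈ m.support
    · exact Finset.sum_eq_zero_iff.mp hrest.1 i (Finset.mem_erase.mpr ⟨hij, hi⟩)
    · exact Finsupp.notMem_support_iff.mp hi

lemma linear_decomp {R : Type*} [CommRing R] {n : ℕ} {P : MvPolynomial (Fin n) R}
    (hP : P.IsHomogeneous 1) :
    P = ∑ j, C (P.coeff (Finsupp.single j 1)) * X j := by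
  apply MvPolynomial.ext
  intro m
  rw [MvPolynomial.coeff_sum]
  simp only [coeff_C_mul, coeff_X', mul_ite, mul_one, mul_zero]
  by_cases hm : m.degree = 1
  · obtain ⟨j0, rfl⟩ := exists_single_of_degree_one m hm
    rw [Finset.sum_eq_single j0]
    · rw [if_pos rfl]
    · intro b _ hb
      rw [if_neg]
      intro h
      exact hb (Finsupp.single_left_injective one_ne_zero h)
    · intro h; exact absurd (Finset.mem_univ j0) h
  · rw [hP.coeff_eq_zero hm]
    refine (Finset.sum_eq_zero fun j _ => ?_).symm
    rw [if_neg]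
    intro h
    apply hm
    rw [← h, Finsupp.degree_apply, Finsupp.support_single_ne_zero _ one_ne_zero,
      Finset.sum_singleton, Finsupp.single_eq_same]

lemma subst_linear {R : Type*} [CommRing R] {n : ℕ} (τ : Matrix (Fin n) (Fin n) R)
    (a : Fin n → R) :
    subst τ (∑ i, C (a i) * X i) = ∑ j, C (Matrix.vecMul a τ j) * X j := by
  simp only [subst, map_sum, _root_.map_mul, aeval_C, aeval_X, algebraMap_eq,
    Finset.mul_sum, Matrix.vecMul, dotProduct]
  rw [Finset.sum_comm]
  refine Finset.sum_congr rfl fun j _ => ?_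
  rw [Finset.sum_mul]
  exact Finset.sum_congr rfl fun i _ => (mul_assoc _ _ _).symm

lemma dvd_linear {R : Type*} [CommRing R] {n : ℕ} (π : R) (c : Fin n → R)
    (h : ∀ j, π ∣ c j) : C π ∣ ∑ j, C (c j) * X (R := R) j := by
  refine Finset.dvd_sum fun j _ => Dvd.dvd.mul_right ?_ _
  obtain ⟨d, hd⟩ := h j
  exact ⟨C d, by rw [hd, C_mul]⟩

lemma dvd_subst {R : Type*} [CommRing R] {n : ℕ} (π : R) (τ : Matrix (Fin n) (Fin n) R)
    {P : MvPolynomial (Fin n) R} (h : C π ∣ P) : C π ∣ subst τ P := by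
  obtain ⟨d, rfl⟩ := h
  exact ⟨subst τ d, by simp [subst, _root_.map_mul, algebraMap_eq]⟩

lemma dvd_subst_of_rep {R : Type*} [CommRing R] {n r : ℕ} (π : R)
    (τ : Matrix (Fin n) (Fin n) R) (P : MvPolynomial (Fin n) R)
    (L Q : Fin r → MvPolynomial (Fin n) R)
    (h : C π ∣ (P - ∑ i, L i * Q i)) (hL : ∀ i, C π ∣ subst τ (L i)) :
    C π ∣ subst τ P := by
  have h1 : C π ∣ subst τ (P - ∑ i, L i * Q i) := dvd_subst _ _ h
  have h2 : subst τ P = subst τ (P - ∑ i, L i * Q i) + ∑ i, subst τ (L i) * subst τ (Q i) := by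
    simp only [subst, map_sub, map_sum, _root_.map_mul]
    ring
  rw [h2]
  exact dvd_add h1 (Finset.dvd_sum fun i _ => (hL i).mul_right _)


set_option maxHeartbeats 1000000 in
lemma exists_tau {𝒪 : Type*} [CommRing 𝒪] [IsDomain 𝒪] [IsDiscreteValuationRing 𝒪]
    (π : 𝒪) (hπ : Irreducible π) {n r : ℕ} (a : Fin r → Fin n → 𝒪) :
    ∃ (s : ℕ) (τ : Matrix (Fin n) (Fin n) 𝒪) (u : 𝒪), s ≤ r ∧ IsUnit u ∧
      τ.det = π ^ s * u ∧ ∀ i j, π ∣ Matrix.vecMul (a i) τ j := by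
  classical
  set I : Ideal 𝒪 := Ideal.span {π} with hI
  haveI hImax : I.IsMaximal := PrincipalIdealRing.isMaximal_of_irreducible hπ
  letI : Field (𝒪 ⧸ I) := Ideal.Quotient.field I
  let q : 𝒪 →+* 𝒪 ⧸ I := Ideal.Quotient.mk I
  have hq0 : ∀ x : 𝒪, q x = 0 ↔ π ∣ x := fun x => by
    rw [Ideal.Quotient.eq_zero_iff_mem, hI, Ideal.mem_span_singleton]
  set A : Matrix (Fin r) (Fin n) (𝒪 ⧸ I) := fun i j => q (a i j) with hA
  set f : (Fin n → 𝒪 ⧸ I) →ₗ[𝒪 ⧸ I] (Fin r → 𝒪 ⧸ I) := A.mulVecLin with hf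
  set W := LinearMap.ker f with hW
  obtain ⟨U, hUW⟩ := W.exists_isCompl
  set s := Module.finrank (𝒪 ⧸ I) U with hs
  have hdim1 : Module.finrank (𝒪 ⧸ I) W + s = n := by
    have := Submodule.finrank_add_eq_of_isCompl hUW
    rwa [Module.finrank_pi, Fintype.card_fin] at this
  have hdim2 : Module.finrank (𝒪 ⧸ I) (LinearMap.range f)
      + Module.finrank (𝒪 ⧸ I) W = n := by
    have := LinearMap.finrank_range_add_finrank_ker f
    rwa [Module.finrank_pi, Fintype.card_fin, ← hW] at this
  have hsr : s ≤ r := by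
    have h1 : Module.finrank (𝒪 ⧸ I) (LinearMap.range f) ≤ r := by
      have h2 := Submodule.finrank_le (LinearMap.range f)
      rwa [Module.finrank_pi, Fintype.card_fin] at h2
    omega
  have hWrank : Module.finrank (𝒪 ⧸ I) W = n - s := by omega
  let bW : Module.Basis (Fin (n - s)) (𝒪 ⧸ I) W := Module.finBasisOfFinrankEq (𝒪 ⧸ I) W hWrank
  let bU : Module.Basis (Fin s) (𝒪 ⧸ I) U := Module.finBasisOfFinrankEq (𝒪 ⧸ I) U rfl
  let e : (Fin s ⊕ Fin (n - s)) ≃ Fin n := finSumFinEquiv.trans (finCongr (by omega))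
  let B : Module.Basis (Fin n) (𝒪 ⧸ I) (Fin n → 𝒪 ⧸ I) :=
    ((bU.prod bW).map (Submodule.prodEquivOfIsCompl U W hUW.symm)).reindex e
  have happ : ∀ x : U × W, (Submodule.prodEquivOfIsCompl U W hUW.symm) x
      = (U.subtype.coprod W.subtype) x := fun x => by
    rw [← Submodule.coe_prodEquivOfIsCompl]; rfl
  have hBW : ∀ m : Fin n, s ≤ (m : ℕ) → B m ∈ W := by
    intro m hm
    have hBm : B m = (Submodule.prodEquivOfIsCompl U W hUW.symm) ((bU.prod bW) (e.symm m)) := by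
      simp [B, Module.Basis.reindex_apply, Module.Basis.map_apply]
    rcases h : e.symm m with i | i
    · exfalso
      have hme : m = e (Sum.inl i) := by rw [← h, Equiv.apply_symm_apply]
      have hlt : (m : ℕ) < s := by
        rw [hme]
        simpa [e, finSumFinEquiv_apply_left] using i.isLt
      omega
    · rw [hBm, h]
      have hpr : (bU.prod bW) (Sum.inr i) = (0, bW i) := by
        ext <;> simp [Module.Basis.prod_apply]
      rw [hpr, happ]
      simp only [LinearMap.coprod_apply, Submodule.coe_subtype, ZeroMemClass.coe_zero, zero_add,
        map_zero]
      exact (bW i).2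
  set P : Matrix (Fin n) (Fin n) (𝒪 ⧸ I) := fun i j => B j i with hP
  have hPdet : P.det ≠ 0 := by
    have hPB : P = (Pi.basisFun (𝒪 ⧸ I) (Fin n)).toMatrix B := by
      ext i j
      rw [Module.Basis.toMatrix_apply, Pi.basisFun_repr]
    rw [hPB]
    haveI := (Pi.basisFun (𝒪 ⧸ I) (Fin n)).invertibleToMatrix B
    exact (Matrix.isUnit_det_of_invertible _).ne_zero
  choose T hT using fun (i j : Fin n) => Ideal.Quotient.mk_surjective (I := I) (P i j)
  let TM : Matrix (Fin n) (Fin n) 𝒪 := Matrix.of T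
  have hTP : TM.map q = P := by ext i j; exact hT i j
  have hTdet : IsUnit TM.det := by
    by_contra hu
    have hmem : TM.det ∈ IsLocalRing.maximalIdeal 𝒪 := hu
    rw [hπ.maximalIdeal_eq] at hmem
    have h0 : q TM.det = 0 := Ideal.Quotient.eq_zero_iff_mem.mpr hmem
    rw [RingHom.map_det, RingHom.mapMatrix_apply, hTP] at h0
    exact hPdet h0
  let D : Matrix (Fin n) (Fin n) 𝒪 := Matrix.diagonal fun j => if (j : ℕ) < s then π else 1
  refine ⟨s, TM * D, TM.det, hsr, hTdet, ?_, ?_⟩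
  · rw [Matrix.det_mul, Matrix.det_diagonal, mul_comm]
    congr 1
    have h1 : ∏ j : Fin n, (if (j : ℕ) < s then π else 1)
        = ∏ j ∈ Finset.range n, (if j < s then π else 1) :=
      Fin.prod_univ_eq_prod_range (fun j => if j < s then π else 1) n
    have hfil : (Finset.range n).filter (fun j => j < s) = Finset.range s := by
      ext x; simp; omega
    rw [h1, Finset.prod_ite, Finset.prod_const, Finset.prod_const, one_pow, mul_one, hfil,
      Finset.card_range]
  · intro i j
    rw [← hq0]
    have hτ : ∀ m, (TM * D) m j = TM m j * (if (j : ℕ) < s then π else 1) := fun m =>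
      Matrix.mul_diagonal _ _ _ _
    have hcomp : q (Matrix.vecMul (a i) (TM * D) j)
        = ∑ m, q (a i m) * (P m j * q (if (j : ℕ) < s then π else 1)) := by
      rw [Matrix.vecMul, dotProduct, map_sum]
      refine Finset.sum_congr rfl fun m _ => ?_
      rw [hτ m, _root_.map_mul, _root_.map_mul, show q (TM m j) = P m j from hT m j]
    by_cases hj : (j : ℕ) < s
    · have hqπ : q π = 0 := (hq0 π).mpr dvd_rfl
      rw [hcomp]
      simp only [if_pos hj, hqπ, mul_zero, Finset.sum_const_zero]
    · have hBj : B j ∈ W := hBW j (not_lt.mp hj)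
      rw [hW] at hBj
      have hfB : A.mulVec (B j) = 0 := by
        have h1 := LinearMap.mem_ker.mp hBj
        rwa [hf, Matrix.mulVecLin_apply] at h1
      have hzero : ∑ m, q (a i m) * B j m = 0 := by
        have h1 := congrFun hfB i
        simpa [Matrix.mulVec, dotProduct, hA] using h1
      rw [hcomp]
      simp only [if_neg hj, _root_.map_one, mul_one, hP]
      exact hzero

lemma exists_tau_poly {𝒪 : Type*} [CommRing 𝒪] [IsDomain 𝒪] [IsDiscreteValuationRing 𝒪]
    (π : 𝒪) (hπ : Irreducible π) {n r : ℕ} (L : Fin r → MvPolynomial (Fin n) 𝒪)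
    (hL : ∀ i, (L i).IsHomogeneous 1) :
    ∃ (s : ℕ) (τ : Matrix (Fin n) (Fin n) 𝒪) (u : 𝒪), s ≤ r ∧ IsUnit u ∧
      τ.det = π ^ s * u ∧ ∀ i, C π ∣ subst τ (L i) := by
  obtain ⟨s, τ, u, hsr, hu, hdet, hdvd⟩ :=
    exists_tau π hπ (fun i j => (L i).coeff (Finsupp.single j 1))
  refine ⟨s, τ, u, hsr, hu, hdet, fun i => ?_⟩
  rw [linear_decomp (hL i), subst_linear]
  exact dvd_linear π _ (hdvd i)

lemma subst_isHomogeneous_one {R : Type*} [CommRing R] {n : ℕ}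
    (τ : Matrix (Fin n) (Fin n) R) (l : MvPolynomial (Fin n) R)
    (hl : l.IsHomogeneous 1) : (subst τ l).IsHomogeneous 1 := by
  rw [linear_decomp hl, subst_linear]
  exact MvPolynomial.IsHomogeneous.sum _ _ _ fun j _ => isHomogeneous_C_mul_X _ _

lemma isHomogeneous_neg {R : Type*} [CommRing R] {n m : ℕ}
    {P : MvPolynomial (Fin n) R} (h : P.IsHomogeneous m) : (-P).IsHomogeneous m :=
  (mem_homogeneousSubmodule _ _).mp
    ((homogeneousSubmodule (Fin n) R m).neg_mem ((mem_homogeneousSubmodule _ _).mpr h))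

/-- If the pair `(F,G)` of a cubic and a quadratic form over `𝒪_K` is
`(α,β)`-reduced with `α > 3`, `β > 2`, then `h(G) > 2`, `h(F - L·G) > 3` for all
linear forms `L`, and `h(F,G) > 5`. -/
theorem reduced_pair_h_invariants {𝒪 : Type*} [CommRing 𝒪] [IsDomain 𝒪]
    [IsDiscreteValuationRing 𝒪] (π : 𝒪) (hπ : Irreducible π) (n : ℕ)
    (F G : MvPolynomial (Fin n) 𝒪)
    (hF : F.IsHomogeneous 3) (hG : G.IsHomogeneous 2)
    (α β : ℝ) (hα : 3 < α) (hβ : 2 < β)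
    (hred : IsReducedPair π F G α β) :
    (¬ hModLe π G 2) ∧
    (∀ L : MvPolynomial (Fin n) 𝒪, L.IsHomogeneous 1 → ¬ hModLe π (F - L * G) 3) ∧
    (¬ hSysModLe π F G 5) := by
  refine ⟨?_, ?_, ?_⟩
  · rintro ⟨L, Q, hL, hdvd⟩
    obtain ⟨s, τ, u, hsr, hu, hdet, hLdvd⟩ := exists_tau_poly π hπ L hL
    refine hred ⟨0, 1, s, 0, τ, u, isHomogeneous_zero _ _ _, hu, hdet, ?_, ?_, ?_⟩
    · rw [pow_zero, map_one]; exact one_dvd _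
    · rw [pow_one]; exact dvd_subst_of_rep π τ G L Q hdvd hLdvd
    · have hs2 : (s : ℝ) ≤ 2 := by exact_mod_cast hsr
      push_cast
      linarith
  · rintro L hLhom ⟨Ls, Q, hLs, hdvd⟩
    obtain ⟨s, τ, u, hsr, hu, hdet, hLdvd⟩ := exists_tau_poly π hπ Ls hLs
    refine hred ⟨1, 0, s, -subst τ L, τ, u,
      isHomogeneous_neg (subst_isHomogeneous_one τ L hLhom), hu, hdet, ?_, ?_, ?_⟩
    · rw [pow_one]
      have h1 : C π ∣ subst τ (F - L * G) := dvd_subst_of_rep π τ _ Ls Q hdvd hLdvd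
      have h2 : subst τ F + -subst τ L * subst τ G = subst τ (F - L * G) := by
        simp only [subst, map_sub, _root_.map_mul]
        ring
      rwa [h2]
    · rw [pow_zero, map_one]; exact one_dvd _
    · have hs3 : (s : ℝ) ≤ 3 := by exact_mod_cast hsr
      push_cast
      linarith
  · rintro ⟨l, hl, Ls, Q, M, hLs, hd1, hd2⟩
    obtain ⟨s, τ, u, hsr, hu, hdet, hLdvd⟩ := exists_tau_poly π hπ Ls hLs
    refine hred ⟨1, 1, s, -subst τ l, τ, u,
      isHomogeneous_neg (subst_isHomogeneous_one τ l hl), hu, hdet, ?_, ?_, ?_⟩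
    · rw [pow_one]
      have h1 : C π ∣ subst τ (F - l * G) := dvd_subst_of_rep π τ _ Ls Q hd1 hLdvd
      have h2 : subst τ F + -subst τ l * subst τ G = subst τ (F - l * G) := by
        simp only [subst, map_sub, _root_.map_mul]
        ring
      rwa [h2]
    · rw [pow_one]; exact dvd_subst_of_rep π τ G Ls M hd2 hLdvd
    · have hs5 : (s : ℝ) ≤ 5 := by exact_mod_cast hsr
      push_cast
      linarith
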